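/- The integer 1 is not a congruent number: there is no right triangle with rational side lengths and area 1. -/

import Mathlib

set_option maxHeartbeats 1000000

/-! Auxiliary development: the equation `a ^ 4 + b ^ 2 = c ^ 4` has no integer solutions
with `a ≠ 0` and `b ≠ 0` (Fermat's descent). We then deduce that `1` is not a congruent
number. -/

/-- A (nontrivial) solution to `a ^ 4 + b ^ 2 = c ^ 4`. -/
def Fermat44 (a b c : ℤ) : Prop :=
  a ≠ 0 ∧ b ≠ 0 ∧ a ^ 4 + b ^ 2 = c ^ 4

namespace Fermat44

theorem mul {a b c k : ℤ} (hk0 : k ≠ 0) (h : Fermat44 a b c) :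
    Fermat44 (k * a) (k ^ 2 * b) (k * c) := by
  refine ⟨mul_ne_zero hk0 h.1, mul_ne_zero (pow_ne_zero 2 hk0) h.2.1, ?_⟩
  have H := h.2.2
  linear_combination k ^ 4 * H

theorem ne_zero {a b c : ℤ} (h : Fermat44 a b c) : c ≠ 0 := by
  obtain ⟨ha, hb, heq⟩ := h
  intro hc
  rw [hc] at heq
  have h1 : (0:ℤ) < a ^ 4 := lt_of_le_of_ne (by positivity) (Ne.symm (pow_ne_zero 4 ha))
  have h2 : (0:ℤ) ≤ b ^ 2 := sq_nonneg b
  have h3 : (0:ℤ) ^ 4 = 0 := by norm_num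
  rw [h3] at heq
  omega

/-- Minimal solutions. -/
def Minimal (a b c : ℤ) : Prop :=
  Fermat44 a b c ∧ ∀ a1 b1 c1 : ℤ, Fermat44 a1 b1 c1 → Int.natAbs c ≤ Int.natAbs c1

theorem exists_minimal {a b c : ℤ} (h : Fermat44 a b c) : ∃ a0 b0 c0, Minimal a0 b0 c0 := by
  classical
  let S : Set ℕ := { n | ∃ s : ℤ × ℤ × ℤ, Fermat44 s.1 s.2.1 s.2.2 ∧ n = Int.natAbs s.2.2 }
  have S_nonempty : S.Nonempty := ⟨Int.natAbs c, ⟨a, b, c⟩, h, rfl⟩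
  let m : ℕ := Nat.find S_nonempty
  have m_mem : m ∈ S := Nat.find_spec S_nonempty
  rcases m_mem with ⟨s0, hs0, hs1⟩
  refine ⟨s0.1, s0.2.1, s0.2.2, hs0, fun a1 b1 c1 h1 => ?_⟩
  rw [← hs1]
  exact Nat.find_min' S_nonempty ⟨⟨a1, b1, c1⟩, h1, rfl⟩

/-- In a minimal solution, `a` and `b` are coprime. -/
theorem coprime_of_minimal {a b c : ℤ} (h : Minimal a b c) : IsCoprime a b := by
  apply Int.isCoprime_iff_gcd_eq_one.mpr
  by_contra hab
  obtain ⟨p, hp, hpa, hpb⟩ := Nat.Prime.not_coprime_iff_dvd.mp hab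
  have hpa' : (p : ℤ) ∣ a := Int.natCast_dvd.mpr hpa
  have hpb' : (p : ℤ) ∣ b := Int.natCast_dvd.mpr hpb
  have hpc : (p : ℤ) ∣ c := by
    have h4 : (p : ℤ) ∣ c ^ 4 := by
      rw [← h.1.2.2]
      exact dvd_add (dvd_pow hpa' (by norm_num)) (dvd_pow hpb' two_ne_zero)
    exact (Nat.prime_iff_prime_int.mp hp).dvd_of_dvd_pow h4
  obtain ⟨a1, rfl⟩ := hpa'
  obtain ⟨c1, rfl⟩ := hpc
  have hpb2 : (p : ℤ) ^ 2 ∣ b := by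
    rw [← Int.pow_dvd_pow_iff two_ne_zero]
    have : ((p:ℤ) ^ 2) ^ 2 ∣ b ^ 2 := by
      have hb2 : b ^ 2 = (p:ℤ) ^ 4 * (c1 ^ 4 - a1 ^ 4) := by
        have H := h.1.2.2
        linear_combination H
      rw [hb2]
      exact ⟨c1 ^ 4 - a1 ^ 4, by ring⟩
    exact this
  obtain ⟨b1, rfl⟩ := hpb2
  have hp0 : (p : ℤ) ≠ 0 := Int.natCast_ne_zero.mpr hp.ne_zero
  have hf : Fermat44 a1 b1 c1 := by
    refine ⟨right_ne_zero_of_mul h.1.1, right_ne_zero_of_mul h.1.2.1, ?_⟩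
    have H := h.1.2.2
    apply (mul_right_inj' (pow_ne_zero 4 hp0)).mp
    linear_combination H
  apply Nat.le_lt_asymm (h.2 _ _ _ hf)
  rw [Int.natAbs_mul, lt_mul_iff_one_lt_left, Int.natAbs_natCast]
  · exact hp.one_lt
  · exact Nat.pos_of_ne_zero (Int.natAbs_ne_zero.2 (ne_zero hf))

theorem neg_of_minimal {a b c : ℤ} : Minimal a b c → Minimal a b (-c) := by
  rintro ⟨⟨ha, hb, heq⟩, h2⟩
  refine ⟨⟨ha, hb, ?_⟩, ?_⟩
  · rw [heq]; ring
  · rwa [Int.natAbs_neg c]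

theorem exists_pos_minimal {a b c : ℤ} (h : Fermat44 a b c) :
    ∃ a0 b0 c0, Minimal a0 b0 c0 ∧ 0 < c0 := by
  obtain ⟨a0, b0, c0, hf⟩ := exists_minimal h
  rcases lt_trichotomy 0 c0 with (h1 | h1 | h1)
  · exact ⟨a0, b0, c0, hf, h1⟩
  · exact absurd h1.symm (ne_zero hf.1)
  · exact ⟨a0, b0, -c0, neg_of_minimal hf, neg_pos.mpr h1⟩

theorem natAbs_lt_of_sq_lt {m c : ℤ} (h : m ^ 2 < c ^ 2) : m.natAbs < c.natAbs := by
  have h1 : (m.natAbs : ℤ) ^ 2 < (c.natAbs : ℤ) ^ 2 := by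
    rwa [Int.natAbs_sq, Int.natAbs_sq]
  have h2 : (m.natAbs : ℤ) < (c.natAbs : ℤ) := by nlinarith [Int.natCast_nonneg m.natAbs, Int.natCast_nonneg c.natAbs]
  exact_mod_cast h2

/-- The second descent step: from `u ^ 4 + 4 * v ^ 4 = c ^ 2` with `u` odd we get a new,
smaller, solution to `a ^ 4 + b ^ 2 = c ^ 4`. -/
theorem descent2 {u v c : ℤ} (hu : u ≠ 0) (hv : v ≠ 0) (hc : 0 < c)
    (hg : Int.gcd (u ^ 2) (2 * v ^ 2) = 1) (hu2 : u % 2 = 1)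
    (heq : u ^ 4 + 4 * v ^ 4 = c ^ 2) :
    ∃ A B C : ℤ, Fermat44 A B C ∧ C.natAbs < c.natAbs := by
  have ht : PythagoreanTriple (u ^ 2) (2 * v ^ 2) c := by
    delta PythagoreanTriple
    linear_combination heq
  have hu22 : u ^ 2 % 2 = 1 := by
    rw [sq, Int.mul_emod, hu2]; decide
  obtain ⟨M, N, h1, h2, h3, h4, _h5, h6⟩ := ht.coprime_classification' hg hu22 hc
  have hMN : M * N = v ^ 2 := by linarith [h2]
  have hN0 : N ≠ 0 := by
    rintro rfl
    rw [mul_zero] at hMN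
    exact hv (pow_eq_zero_iff two_ne_zero |>.mp hMN.symm)
  have hM0 : M ≠ 0 := by
    rintro rfl
    have : u ^ 2 = -N ^ 2 := by linarith [h1]
    nlinarith [sq_nonneg u, sq_nonneg N, sq_pos_of_ne_zero hN0, sq_pos_of_ne_zero hu]
  have hMpos : 0 < M := lt_of_le_of_ne h6 (Ne.symm hM0)
  have hNpos : 0 < N := by
    rcases lt_trichotomy 0 N with hh | hh | hh
    · exact hh
    · exact absurd hh.symm hN0
    · nlinarith [hMN, sq_pos_of_ne_zero hv]
  -- M and N are coprime squares
  obtain ⟨e, he⟩ := Int.sq_of_gcd_eq_one h4 hMN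
  have hMe : M = e ^ 2 := by
    rcases he with he | he
    · exact he
    · exfalso; nlinarith [sq_nonneg e]
  have hNM : N * M = v ^ 2 := by rw [mul_comm]; exact hMN
  obtain ⟨f, hf⟩ := Int.sq_of_gcd_eq_one (by rwa [Int.gcd_comm] at h4) hNM
  have hNf : N = f ^ 2 := by
    rcases hf with hf | hf
    · exact hf
    · exfalso; nlinarith [sq_nonneg f]
  have hfo : f ≠ 0 := by
    rintro rfl
    rw [zero_pow two_ne_zero] at hNf
    exact hN0 hNf
  refine ⟨f, u, e, ⟨hfo, hu, ?_⟩, ?_⟩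
  · -- f ^ 4 + u ^ 2 = e ^ 4
    have : u ^ 2 = M ^ 2 - N ^ 2 := h1
    rw [hMe, hNf] at this
    linarith
  · -- |e| < |c|
    have h7 : e ^ 2 ≤ M ^ 2 := by nlinarith [hMe, hMpos]
    have h8 : e ^ 2 < c := by
      rw [h3]
      nlinarith [sq_pos_of_ne_zero hN0, hMe, hMpos]
    apply natAbs_lt_of_sq_lt
    nlinarith [sq_nonneg e, sq_nonneg (e^2 - 1)]

theorem not_minimal {a b c : ℤ} (h : Minimal a b c) (hc : 0 < c) : False := by
  obtain ⟨⟨ha, hb, heq⟩, hmin⟩ := h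
  have hab : IsCoprime a b := coprime_of_minimal ⟨⟨ha, hb, heq⟩, hmin⟩
  rcases Int.emod_two_eq_zero_or_one a with ha2 | ha2
  · -- `a` even, hence `b` odd
    have hb2 : b % 2 = 1 := by
      rcases Int.emod_two_eq_zero_or_one b with hb2 | hb2
      · exfalso
        have h1 : (2:ℤ) ∣ a := Int.dvd_of_emod_eq_zero ha2
        have h2 : (2:ℤ) ∣ b := Int.dvd_of_emod_eq_zero hb2
        have := (Int.isCoprime_iff_gcd_eq_one.mp hab)
        have h3 : (2:ℤ) ∣ Int.gcd a b := Int.dvd_coe_gcd h1 h2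
        rw [this] at h3
        norm_num at h3
      · exact hb2
    have ht : PythagoreanTriple b (a ^ 2) (c ^ 2) := by
      delta PythagoreanTriple
      linear_combination heq
    have hg : Int.gcd b (a ^ 2) = 1 :=
      Int.isCoprime_iff_gcd_eq_one.mp (hab.symm.pow_right)
    have hc2 : 0 < c ^ 2 := by positivity
    obtain ⟨m, n, h1, h2, h3, h4, h5, h6⟩ := ht.coprime_classification' hg hb2 hc2
    -- a ^ 2 = 2 * m * n, with m, n > 0
    have hmn : 0 < m * n := by nlinarith [sq_pos_of_ne_zero ha, h2]
    have hm0 : 0 < m := by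
      rcases lt_or_eq_of_le h6 with hm | hm
      · exact hm
      · exfalso; rw [← hm, zero_mul] at hmn; exact lt_irrefl 0 hmn
    have hn0 : 0 < n := by
      rcases lt_trichotomy 0 n with hh | hh | hh
      · exact hh
      · exfalso; rw [← hh, mul_zero] at hmn; exact lt_irrefl 0 hmn
      · exfalso; nlinarith
    -- a is even, write a = 2 * a1
    obtain ⟨a1, rfl⟩ : (2:ℤ) ∣ a := Int.dvd_of_emod_eq_zero ha2
    have ha1 : a1 ≠ 0 := by
      rintro rfl; exact ha (by ring)
    have hmn2 : m * n = 2 * a1 ^ 2 := by nlinarith [h2]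
    have hmncop : IsCoprime m n := Int.isCoprime_iff_gcd_eq_one.mpr h4
    rcases h5 with ⟨hme, hno⟩ | ⟨hmo, hne⟩
    · -- m even, n odd
      obtain ⟨m1, rfl⟩ : (2:ℤ) ∣ m := Int.dvd_of_emod_eq_zero hme
      have hm1n : m1 * n = a1 ^ 2 := by linarith [hmn2]
      have hcop1 : Int.gcd m1 n = 1 :=
        Int.isCoprime_iff_gcd_eq_one.mp hmncop.of_mul_left_right
      have hm1pos : 0 < m1 := by linarith
      obtain ⟨s, hs⟩ := Int.sq_of_gcd_eq_one hcop1 hm1n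
      have hm1s : m1 = s ^ 2 := by
        rcases hs with hs | hs
        · exact hs
        · exfalso; nlinarith [sq_nonneg s]
      obtain ⟨t, htt⟩ := Int.sq_of_gcd_eq_one (by rwa [Int.gcd_comm] at hcop1)
        (by rw [mul_comm]; exact hm1n)
      have hnt : n = t ^ 2 := by
        rcases htt with htt | htt
        · exact htt
        · exfalso; nlinarith [sq_nonneg t]
      have hs0 : s ≠ 0 := by
        rintro rfl; rw [zero_pow two_ne_zero] at hm1s; omega
      have ht0 : t ≠ 0 := by
        rintro rfl; rw [zero_pow two_ne_zero] at hnt; omega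
      have hto : t % 2 = 1 := by
        rcases Int.emod_two_eq_zero_or_one t with h | h
        · exfalso
          have : n % 2 = 0 := by rw [hnt, sq, Int.mul_emod, h]; decide
          omega
        · exact h
      have hgcd : Int.gcd (t ^ 2) (2 * s ^ 2) = 1 := by
        rw [← hnt, ← hm1s, Int.gcd_comm]
        exact h4
      have heq2 : t ^ 4 + 4 * s ^ 4 = c ^ 2 := by
        linear_combination (-1) * h3 - 4 * (m1 + s ^ 2) * hm1s - (n + t ^ 2) * hnt
      obtain ⟨A, B, C, hf, hlt⟩ := descent2 ht0 hs0 hc hgcd hto heq2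
      exact absurd (hmin _ _ _ hf) (Nat.not_le_of_lt hlt)
    · -- m odd, n even
      obtain ⟨n1, rfl⟩ : (2:ℤ) ∣ n := Int.dvd_of_emod_eq_zero hne
      have hm1n : m * n1 = a1 ^ 2 := by linarith [hmn2]
      have hcop1 : Int.gcd m n1 = 1 :=
        Int.isCoprime_iff_gcd_eq_one.mp hmncop.of_mul_right_right
      have hn1pos : 0 < n1 := by linarith
      obtain ⟨s, hs⟩ := Int.sq_of_gcd_eq_one hcop1 hm1n
      have hms : m = s ^ 2 := by
        rcases hs with hs | hs
        · exact hs
        · exfalso; nlinarith [sq_nonneg s]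
      obtain ⟨t, htt⟩ := Int.sq_of_gcd_eq_one (by rwa [Int.gcd_comm] at hcop1)
        (by rw [mul_comm]; exact hm1n)
      have hnt : n1 = t ^ 2 := by
        rcases htt with htt | htt
        · exact htt
        · exfalso; nlinarith [sq_nonneg t]
      have hs0 : s ≠ 0 := by
        rintro rfl; rw [zero_pow two_ne_zero] at hms; omega
      have ht0 : t ≠ 0 := by
        rintro rfl; rw [zero_pow two_ne_zero] at hnt; omega
      have hso : s % 2 = 1 := by
        rcases Int.emod_two_eq_zero_or_one s with h | h
        · exfalso
          have : m % 2 = 0 := by rw [hms, sq, Int.mul_emod, h]; decide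
          omega
        · exact h
      have hgcd : Int.gcd (s ^ 2) (2 * t ^ 2) = 1 := by
        rw [← hms, ← hnt]
        exact h4
      have heq2 : s ^ 4 + 4 * t ^ 4 = c ^ 2 := by
        linear_combination (-1) * h3 - (m + s ^ 2) * hms - 4 * (n1 + t ^ 2) * hnt
      obtain ⟨A, B, C, hf, hlt⟩ := descent2 hs0 ht0 hc hgcd hso heq2
      exact absurd (hmin _ _ _ hf) (Nat.not_le_of_lt hlt)
  · -- `a` odd
    have ht : PythagoreanTriple (a ^ 2) b (c ^ 2) := by
      delta PythagoreanTriple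
      linear_combination heq
    have hg : Int.gcd (a ^ 2) b = 1 := Int.isCoprime_iff_gcd_eq_one.mp hab.pow_left
    have ha22 : a ^ 2 % 2 = 1 := by rw [sq, Int.mul_emod, ha2]; decide
    have hc2 : 0 < c ^ 2 := by positivity
    obtain ⟨m, n, h1, h2, h3, h4, _h5, h6⟩ := ht.coprime_classification' hg ha22 hc2
    have hn0 : n ≠ 0 := by
      rintro rfl
      rw [mul_zero] at h2
      exact hb h2
    have hm0 : m ≠ 0 := by
      rintro rfl
      norm_num at h1
      linarith [sq_pos_of_ne_zero ha, sq_nonneg n, h1]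
    have hf : Fermat44 n (a * c) m :=
      ⟨hn0, mul_ne_zero ha (ne_of_gt hc), by linear_combination c ^ 2 * h1 + (m ^ 2 - n ^ 2) * h3⟩
    have hlt : m.natAbs < c.natAbs := by
      apply natAbs_lt_of_sq_lt
      have hn2 : 0 < n ^ 2 := sq_pos_of_ne_zero hn0
      linarith [h3]
    exact absurd (hmin _ _ _ hf) (Nat.not_le_of_lt hlt)

end Fermat44

theorem not_fermat44 {a b c : ℤ} (ha : a ≠ 0) (hb : b ≠ 0) : a ^ 4 + b ^ 2 ≠ c ^ 4 := by
  intro h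
  obtain ⟨a0, b0, c0, hm, hp⟩ := Fermat44.exists_pos_minimal ⟨ha, hb, h⟩
  exact Fermat44.not_minimal hm hp

/-- No rational solution to `V ^ 4 + c ^ 2 = U ^ 4` with `V, c ≠ 0`. -/
theorem not_fermat44_rat {V c U : ℚ} (hV : V ≠ 0) (hc : c ≠ 0) : V ^ 4 + c ^ 2 ≠ U ^ 4 := by
  intro h
  set D : ℤ := (V.den : ℤ) * c.den * U.den with hD
  have hVd : (V.den : ℚ) ≠ 0 := by exact_mod_cast V.den_nz
  have hcd : (c.den : ℚ) ≠ 0 := by exact_mod_cast c.den_nz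
  have hUd : (U.den : ℚ) ≠ 0 := by exact_mod_cast U.den_nz
  set A : ℤ := V.num * (c.den * U.den) with hA
  set B : ℤ := c.num * ((V.den : ℤ) ^ 2 * c.den * U.den ^ 2) with hB
  set C : ℤ := U.num * ((V.den : ℤ) * c.den) with hC
  have hVn : (V.num : ℚ) = V * V.den := by
    have h0 := Rat.num_div_den V
    rw [div_eq_iff hVd] at h0
    exact h0
  have hcn : (c.num : ℚ) = c * c.den := by
    have h0 := Rat.num_div_den c
    rw [div_eq_iff hcd] at h0
    exact h0
  have hUn : (U.num : ℚ) = U * U.den := by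
    have h0 := Rat.num_div_den U
    rw [div_eq_iff hUd] at h0
    exact h0
  have hAq : (A : ℚ) = V * D := by
    rw [hA, hD]
    push_cast
    rw [hVn]
    ring
  have hBq : (B : ℚ) = c * (D : ℚ) ^ 2 := by
    rw [hB, hD]
    push_cast
    rw [hcn]
    ring
  have hCq : (C : ℚ) = U * D := by
    rw [hC, hD]
    push_cast
    rw [hUn]
    ring
  have hkey : (A : ℚ) ^ 4 + (B : ℚ) ^ 2 = (C : ℚ) ^ 4 := by
    rw [hAq, hBq, hCq]
    linear_combination ((D : ℚ) ^ 4) * h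
  have hkeyZ : A ^ 4 + B ^ 2 = C ^ 4 := by exact_mod_cast hkey
  have hVdz : (V.den : ℤ) ≠ 0 := by exact_mod_cast V.den_nz
  have hcdz : (c.den : ℤ) ≠ 0 := by exact_mod_cast c.den_nz
  have hUdz : (U.den : ℤ) ≠ 0 := by exact_mod_cast U.den_nz
  have hA0 : A ≠ 0 :=
    mul_ne_zero (Rat.num_ne_zero.mpr hV) (mul_ne_zero hcdz hUdz)
  have hB0 : B ≠ 0 :=
    mul_ne_zero (Rat.num_ne_zero.mpr hc)
      (mul_ne_zero (mul_ne_zero (pow_ne_zero 2 hVdz) hcdz) (pow_ne_zero 2 hUdz))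
  exact not_fermat44 hA0 hB0 hkeyZ

theorem rat_sq_ne_two (q : ℚ) : q ^ 2 ≠ 2 := by
  intro h
  have h1 : ((q : ℝ)) ^ 2 = 2 := by exact_mod_cast h
  have h2 : Real.sqrt 2 = |(q : ℝ)| := by
    rw [← h1, Real.sqrt_sq_eq_abs]
  apply irrational_sqrt_two
  rw [h2, ← Rat.cast_abs]
  exact ⟨|q|, rfl⟩

/-- Fermat: `1` is not a congruent number — there is no right triangle with rational side
lengths and area `1`. -/
theorem one_not_congruent :
    ¬∃ a b c : ℚ, 0 < a ∧ 0 < b ∧ 0 < c ∧ a ^ 2 + b ^ 2 = c ^ 2 ∧ a * b / 2 = 1 := by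
  rintro ⟨a, b, c, ha, hb, hc, hpyth, harea⟩
  have hab : a * b = 2 := by linarith [harea]
  set U : ℚ := (a + b) / 2 with hU
  set V : ℚ := (a - b) / 2 with hV
  have key : V ^ 4 + c ^ 2 = U ^ 4 := by
    rw [hU, hV]
    linear_combination (-1 : ℚ) * hpyth - ((a ^ 2 + b ^ 2) / 2) * hab
  have hV0 : V ≠ 0 := by
    rw [hV]
    intro h
    have hab' : a = b := by
      field_simp at h
      linarith
    rw [hab'] at hab
    exact rat_sq_ne_two b (by rw [sq]; exact hab)
  exact not_fermat44_rat hV0 (ne_of_gt hc) key
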